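/- Let T, S : H₁ → H₂ be bounded linear operators with R(T) closed, and suppose N(T) ⊆ N(S) and ‖S‖ ‖T†‖ < 1. Then (i) N(T + S) = N(T), and (ii) R(T + S) is closed and ‖(T + S)†‖ ≤ ‖T†‖ / (1 − ‖S‖ ‖T†‖). -/

import Mathlib

/-- `Td` is the Moore–Penrose inverse of the bounded operator `T` with closed range:
`T T† = P_{R(T)}`, `T† T = P_{N(T)^⊥}` and `N(T†) = R(T)^⊥` (the projection identities
are expressed via the characteristic orthogonality properties of orthogonal
projections onto closed subspaces). -/
structure IsMPBOf {H₁ H₂ : Type*} [NormedAddCommGroup H₁] [InnerProductSpace ℂ H₁]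
    [NormedAddCommGroup H₂] [InnerProductSpace ℂ H₂]
    (T : H₁ →L[ℂ] H₂) (Td : H₂ →L[ℂ] H₁) : Prop where
  mem_carrier : ∀ y : H₂, Td y ∈ (LinearMap.ker (T : H₁ →ₗ[ℂ] H₂))ᗮ
  proj_ran : ∀ y : H₂, y - T (Td y) ∈ (LinearMap.range (T : H₁ →ₗ[ℂ] H₂))ᗮ
  proj_ker : ∀ x : H₁, x - Td (T x) ∈ LinearMap.ker (T : H₁ →ₗ[ℂ] H₂)
  ker_eq : ∀ y : H₂, Td y = 0 ↔ y ∈ (LinearMap.range (T : H₁ →ₗ[ℂ] H₂))ᗮ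

/-- Corollary 3.12 (Ding–Huang, Lemma 4.3): if `T` is bounded with closed range,
`N(T) ⊆ N(S)` and `‖S‖ ‖T†‖ < 1`, then `N(T + S) = N(T)`, `R(T + S)` is closed and
`‖(T + S)†‖ ≤ ‖T†‖/(1 − ‖S‖ ‖T†‖)`. -/
theorem stmt10 {H₁ H₂ : Type*} [NormedAddCommGroup H₁] [InnerProductSpace ℂ H₁] [CompleteSpace H₁]
    [NormedAddCommGroup H₂] [InnerProductSpace ℂ H₂] [CompleteSpace H₂]
    (T S : H₁ →L[ℂ] H₂)
    (hran : IsClosed (LinearMap.range (T : H₁ →ₗ[ℂ] H₂) : Set H₂))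
    (Td : H₂ →L[ℂ] H₁) (hMP : IsMPBOf T Td)
    (hker : LinearMap.ker (T : H₁ →ₗ[ℂ] H₂) ≤ LinearMap.ker (S : H₁ →ₗ[ℂ] H₂))
    (hnorm : ‖S‖ * ‖Td‖ < 1) :
    LinearMap.ker ((T + S : H₁ →L[ℂ] H₂) : H₁ →ₗ[ℂ] H₂) = LinearMap.ker (T : H₁ →ₗ[ℂ] H₂) ∧
      IsClosed (LinearMap.range ((T + S : H₁ →L[ℂ] H₂) : H₁ →ₗ[ℂ] H₂) : Set H₂) ∧
      ∃ U : H₂ →L[ℂ] H₁, IsMPBOf (T + S) U ∧ ‖U‖ ≤ ‖Td‖ / (1 - ‖S‖ * ‖Td‖) := by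
  have hpos : (0:ℝ) < 1 - ‖S‖ * ‖Td‖ := by linarith
  set M : Submodule ℂ H₁ := (LinearMap.ker (T : H₁ →ₗ[ℂ] H₂))ᗮ with hM
  -- fixed point: m ∈ M → Td (T m) = m
  have hfix : ∀ m : H₁, m ∈ M → Td (T m) = m := by
    intro m hm
    have h1 := hMP.proj_ker m
    have h2 : m - Td (T m) ∈ M := Submodule.sub_mem _ hm (hMP.mem_carrier _)
    have h0 : m - Td (T m) = 0 :=
      (Submodule.mem_bot ℂ).mp ((Submodule.orthogonal_disjoint (LinearMap.ker (T : H₁ →ₗ[ℂ] H₂))).le_bot ⟨h1, h2⟩)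
    have := sub_eq_zero.mp h0
    exact this.symm
  -- S agrees on x and Td (T x)
  have hSfix : ∀ x : H₁, S (Td (T x)) = S x := by
    intro x
    have h1 : x - Td (T x) ∈ LinearMap.ker (S : H₁ →ₗ[ℂ] H₂) := hker (hMP.proj_ker x)
    have := LinearMap.mem_ker.mp h1
    rw [map_sub] at this
    linear_combination (norm := module) -this
  have hTfix : ∀ x : H₁, T (Td (T x)) = T x := by
    intro x
    have h1 : x - Td (T x) ∈ LinearMap.ker (T : H₁ →ₗ[ℂ] H₂) := hMP.proj_ker x
    have := LinearMap.mem_ker.mp h1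
    rw [map_sub] at this
    linear_combination (norm := module) -this
  have hTSfix : ∀ x : H₁, (T + S) (Td (T x)) = (T + S) x := by
    intro x
    simp only [ContinuousLinearMap.add_apply, hSfix, hTfix]
  -- key estimate
  have key : ∀ m : H₁, m ∈ M → (1 - ‖S‖ * ‖Td‖) * ‖m‖ ≤ ‖Td‖ * ‖(T + S) m‖ := by
    intro m hm
    have h1 : ‖m‖ ≤ ‖Td‖ * ‖T m‖ := by
      conv_lhs => rw [← hfix m hm]
      exact Td.le_opNorm _
    have h2 : ‖T m‖ ≤ ‖(T + S) m‖ + ‖S m‖ := by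
      have : T m = (T + S) m - S m := by
        simp only [ContinuousLinearMap.add_apply]; abel
      rw [this]; exact norm_sub_le _ _
    have h3 : ‖S m‖ ≤ ‖S‖ * ‖m‖ := S.le_opNorm m
    have h4 : (0:ℝ) ≤ ‖Td‖ := norm_nonneg _
    nlinarith [norm_nonneg m]
  -- kernel equality
  have hkereq : LinearMap.ker ((T + S : H₁ →L[ℂ] H₂) : H₁ →ₗ[ℂ] H₂) = LinearMap.ker (T : H₁ →ₗ[ℂ] H₂) := by
    ext x
    simp only [LinearMap.mem_ker, ContinuousLinearMap.coe_coe]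
    constructor
    · intro hx
      have hx' : (T + S) (Td (T x)) = 0 := by rw [hTSfix x]; exact hx
      have hk := key (Td (T x)) (hMP.mem_carrier _)
      rw [hx', norm_zero, mul_zero] at hk
      have : ‖Td (T x)‖ = 0 := by nlinarith [norm_nonneg (Td (T x))]
      have hTd0 : Td (T x) = 0 := norm_eq_zero.mp this
      have := hMP.proj_ker x
      rw [hTd0, sub_zero] at this
      exact this
    · intro hx
      have hS : S x = 0 := hker hx
      have hT : T x = 0 := hx
      simp [ContinuousLinearMap.add_apply, hS, hT]
  -- the restricted operator
  set A : M →L[ℂ] H₂ := (T + S).comp (Submodule.subtypeL M) with hA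
  have hAapp : ∀ m : M, A m = (T + S) (m : H₁) := fun m => rfl
  have hKey' : ∀ m : M, ‖m‖ ≤ (‖Td‖ / (1 - ‖S‖ * ‖Td‖)) * ‖A m‖ := by
    intro m
    have hnn : ‖(m : M)‖ = ‖(m : H₁)‖ := rfl
    rw [div_mul_eq_mul_div, le_div_iff₀ hpos]
    calc ‖m‖ * (1 - ‖S‖ * ‖Td‖) = (1 - ‖S‖ * ‖Td‖) * ‖(m : H₁)‖ := by rw [hnn]; ring
    _ ≤ ‖Td‖ * ‖(T + S) (m : H₁)‖ := key _ m.2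
    _ = ‖Td‖ * ‖A m‖ := by rw [hAapp]
  set K : NNReal := ⟨‖Td‖ / (1 - ‖S‖ * ‖Td‖), by positivity⟩ with hK
  have hAL : AntilipschitzWith K A := A.antilipschitz_of_bound (fun x => hKey' x)
  have hArange : IsClosed (Set.range A) := hAL.isClosed_range A.uniformContinuous
  have hrangeEq : (LinearMap.range ((T + S : H₁ →L[ℂ] H₂) : H₁ →ₗ[ℂ] H₂) : Set H₂) = Set.range A := by
    ext y
    constructor
    · rintro ⟨x, rfl⟩
      exact ⟨⟨Td (T x), hMP.mem_carrier _⟩, hTSfix x⟩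
    · rintro ⟨m, rfl⟩
      exact ⟨(m : H₁), rfl⟩
  have hclosed : IsClosed (LinearMap.range ((T + S : H₁ →L[ℂ] H₂) : H₁ →ₗ[ℂ] H₂) : Set H₂) := hrangeEq ▸ hArange
  refine ⟨hkereq, hclosed, ?_⟩
  -- the range as a closed submodule
  set R : Submodule ℂ H₂ := LinearMap.range ((T + S : H₁ →L[ℂ] H₂) : H₁ →ₗ[ℂ] H₂) with hR
  have : CompleteSpace R := hclosed.completeSpace_coe
  set A' : M →L[ℂ] R := A.codRestrict R (fun m => ⟨(m : H₁), rfl⟩) with hA'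
  have hA'app : ∀ m : M, (A' m : H₂) = (T + S) (m : H₁) := fun m => rfl
  have hinj : LinearMap.ker (A' : M →ₗ[ℂ] R) = ⊥ := by
    rw [LinearMap.ker_eq_bot']
    intro m hm
    have h0 : A m = 0 := by
      have := congrArg (Subtype.val) hm
      exact this
    have := hKey' m
    rw [h0, norm_zero, mul_zero] at this
    exact norm_le_zero_iff.mp this
  have hsurj : LinearMap.range (A' : M →ₗ[ℂ] R) = ⊤ := by
    rw [LinearMap.range_eq_top]
    rintro ⟨y, x, rfl⟩
    exact ⟨⟨Td (T x), hMP.mem_carrier _⟩, Subtype.ext (hTSfix x)⟩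
  set e : M ≃L[ℂ] R := ContinuousLinearEquiv.ofBijective A' hinj hsurj with he
  have heapp : ∀ m : M, e m = A' m := fun m => rfl
  set U : H₂ →L[ℂ] H₁ :=
    (Submodule.subtypeL M).comp ((e.symm : R →L[ℂ] M).comp (R.orthogonalProjectionOnto)) with hU
  have hUapp : ∀ y : H₂, U y = (e.symm (R.orthogonalProjectionOnto y) : H₁) := fun y => rfl
  have hTSU : ∀ y : H₂, (T + S) (U y) = (R.orthogonalProjectionOnto y : H₂) := by
    intro y
    rw [hUapp]
    have : (T + S) ((e.symm (R.orthogonalProjectionOnto y) : M) : H₁)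
        = (A' (e.symm (R.orthogonalProjectionOnto y)) : H₂) := rfl
    rw [this]
    congr 1
    rw [← heapp]
    exact e.apply_symm_apply _
  refine ⟨U, ?_, ?_⟩
  · constructor
    · intro y
      rw [hkereq, hUapp]
      exact (e.symm (R.orthogonalProjectionOnto y)).2
    · intro y
      rw [hTSU]
      exact R.sub_starProjection_mem_orthogonal y
    · intro x
      have hmem : (T + S) x ∈ R := ⟨x, rfl⟩
      have hproj : R.orthogonalProjectionOnto ((T + S) x) = ⟨(T + S) x, hmem⟩ :=
        Submodule.orthogonalProjectionOnto_mem_subspace_eq_self (⟨(T + S) x, hmem⟩ : R)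
      have hAm : A' ⟨Td (T x), hMP.mem_carrier _⟩ = ⟨(T + S) x, hmem⟩ :=
        Subtype.ext (hTSfix x)
      have : U ((T + S) x) = Td (T x) := by
        rw [hUapp, hproj, ← hAm, ← heapp, e.symm_apply_apply]
      rw [this, hkereq]
      exact hMP.proj_ker x
    · intro y
      rw [hUapp]
      constructor
      · intro h
        have h1 : e.symm (R.orthogonalProjectionOnto y) = 0 := by
          exact_mod_cast Subtype.ext h
        have h2 : R.orthogonalProjectionOnto y = 0 := by
          have := congrArg e h1
          rwa [e.apply_symm_apply, map_zero] at this
        exact Submodule.orthogonalProjectionOnto_eq_zero_iff.mp h2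
      · intro h
        have h2 : R.orthogonalProjectionOnto y = 0 := Submodule.orthogonalProjectionOnto_eq_zero_iff.mpr h
        rw [h2, map_zero]
        rfl
  · apply ContinuousLinearMap.opNorm_le_bound _ (by positivity)
    intro y
    rw [hUapp]
    have h1 : ‖((e.symm (R.orthogonalProjectionOnto y)) : H₁)‖
        ≤ (‖Td‖ / (1 - ‖S‖ * ‖Td‖)) * ‖A (e.symm (R.orthogonalProjectionOnto y))‖ :=
      hKey' _
    have h2 : A (e.symm (R.orthogonalProjectionOnto y)) = (R.orthogonalProjectionOnto y : H₂) := by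
      have : A (e.symm (R.orthogonalProjectionOnto y))
          = (A' (e.symm (R.orthogonalProjectionOnto y)) : H₂) := rfl
      rw [this, ← heapp, e.apply_symm_apply]
    rw [h2] at h1
    have h3 : ‖(R.orthogonalProjectionOnto y : H₂)‖ ≤ ‖y‖ := by
      have h4 : ‖R.orthogonalProjectionOnto y‖ ≤ 1 * ‖y‖ :=
        (R.orthogonalProjectionOnto).le_of_opNorm_le (Submodule.orthogonalProjectionOnto_norm_le R) y
      rw [one_mul] at h4
      exact h4
    calc ‖((e.symm (R.orthogonalProjectionOnto y)) : H₁)‖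
        ≤ (‖Td‖ / (1 - ‖S‖ * ‖Td‖)) * ‖(R.orthogonalProjectionOnto y : H₂)‖ := h1
    _ ≤ (‖Td‖ / (1 - ‖S‖ * ‖Td‖)) * ‖y‖ := by
        apply mul_le_mul_of_nonneg_left h3 (by positivity)
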